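/- Let (Ω, μ) be a probability space, X a nonempty type, E a measurable space, ξ : Ω → E measurable, and f : X → E → ℝ. Fix N ≥ 1 and equip Ω^N (respectively Ω^{N+1}) with the product measure μ^{⊗N} (respectively μ^{⊗(N+1)}). Assume that for every x the function ω ↦ f(x, ξ(ω)) is μ-integrable, that for M ∈ {N, N+1} the function (ω₁,…,ω_M) ↦ ⨅_{x ∈ X} (1/M) ∑_{i=1}^{M} f(x, ξ(ω_i)) is μ^{⊗M}-integrable, and that for almost every sample batch the set { (1/M) ∑_{i=1}^{M} f(x, ξ(ω_i)) : x ∈ X } is bounded below. Then ∫_{Ω^{N+1}} ⨅_{x ∈ X} (1/(N+1)) ∑_{i=1}^{N+1} f(x, ξ(ω_i)) d μ^{⊗(N+1)} ≥ ∫_{Ω^N} ⨅_{x ∈ X} (1/N) ∑_{i=1}^{N} f(x, ξ(ω_i)) d μ^{⊗N}. -/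

import Mathlib

open MeasureTheory

/-- Monotonicity of the SAA lower bound: the expected optimal value of the
sampled problem is nondecreasing in the sample size N. -/
theorem saa_expected_value_mono
    {Ω : Type*} [MeasurableSpace Ω] (μ : Measure Ω) [IsProbabilityMeasure μ]
    {X : Type*} [Nonempty X] {E : Type*} [MeasurableSpace E]
    (ξ : Ω → E) (hξ : Measurable ξ) (f : X → E → ℝ)
    (N : ℕ) (hN : 1 ≤ N)
    (hint : ∀ x : X, Integrable (fun ω => f x (ξ ω)) μ)
    (hinfN : Integrable
      (fun ω : Fin N → Ω => ⨅ x : X, (1 / (N : ℝ)) * ∑ i : Fin N, f x (ξ (ω i)))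
      (Measure.pi fun _ : Fin N => μ))
    (hinfN1 : Integrable
      (fun ω : Fin (N + 1) → Ω =>
        ⨅ x : X, (1 / ((N : ℝ) + 1)) * ∑ i : Fin (N + 1), f x (ξ (ω i)))
      (Measure.pi fun _ : Fin (N + 1) => μ))
    (hbddN : ∀ᵐ ω ∂(Measure.pi fun _ : Fin N => μ),
      BddBelow (Set.range fun x : X => (1 / (N : ℝ)) * ∑ i : Fin N, f x (ξ (ω i))))
    (hbddN1 : ∀ᵐ ω ∂(Measure.pi fun _ : Fin (N + 1) => μ),
      BddBelow (Set.range fun x : X =>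
        (1 / ((N : ℝ) + 1)) * ∑ i : Fin (N + 1), f x (ξ (ω i)))) :
    ∫ ω : Fin (N + 1) → Ω,
        (⨅ x : X, (1 / ((N : ℝ) + 1)) * ∑ i : Fin (N + 1), f x (ξ (ω i)))
        ∂(Measure.pi fun _ : Fin (N + 1) => μ)
      ≥ ∫ ω : Fin N → Ω,
          (⨅ x : X, (1 / (N : ℝ)) * ∑ i : Fin N, f x (ξ (ω i)))
          ∂(Measure.pi fun _ : Fin N => μ) := by
  have hNne : (N : ℝ) ≠ 0 := Nat.cast_ne_zero.2 (by omega)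
  set μN : Measure (Fin N → Ω) := Measure.pi fun _ : Fin N => μ with hμN
  set P1 : Measure (Fin (N + 1) → Ω) := Measure.pi fun _ : Fin (N + 1) => μ with hP1
  set F : (Fin N → Ω) → ℝ :=
    fun ω => ⨅ x : X, (1 / (N : ℝ)) * ∑ i : Fin N, f x (ξ (ω i)) with hF
  -- the leave-one-out maps
  set drop : Fin (N + 1) → (Fin (N + 1) → Ω) → (Fin N → Ω) :=
    fun j ω i => ω (j.succAbove i) with hdrop
  have hmp : ∀ j : Fin (N + 1), MeasurePreserving (drop j) P1 μN := by
    intro j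
    have h1 := measurePreserving_piFinSuccAbove (fun _ : Fin (N + 1) => μ) j
    have h2 : MeasurePreserving (Prod.snd) (μ.prod μN) μN :=
      ⟨measurable_snd, by simp⟩
    exact h2.comp h1
  -- the average of the leave-one-out SAA values
  set g : (Fin (N + 1) → Ω) → ℝ :=
    fun ω => (1 / ((N : ℝ) + 1)) * ∑ j : Fin (N + 1), F (drop j ω) with hg
  have hint_comp : ∀ j : Fin (N + 1), Integrable (fun ω => F (drop j ω)) P1 :=
    fun j => ((hmp j).integrable_comp hinfN.aestronglyMeasurable).2 hinfN
  have hgint : Integrable g P1 :=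
    (integrable_finset_sum _ fun j _ => hint_comp j).const_mul _
  -- a.e. pointwise bound : g ≤ the (N+1)-sample SAA value
  have hae : ∀ᵐ ω ∂P1, g ω ≤
      ⨅ x : X, (1 / ((N : ℝ) + 1)) * ∑ i : Fin (N + 1), f x (ξ (ω i)) := by
    have hbdd' : ∀ᵐ ω ∂P1, ∀ j : Fin (N + 1),
        BddBelow (Set.range fun x : X =>
          (1 / (N : ℝ)) * ∑ i : Fin N, f x (ξ (drop j ω i))) := by
      rw [MeasureTheory.ae_all_iff]
      intro j
      exact (hmp j).quasiMeasurePreserving.ae hbddN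
    filter_upwards [hbdd'] with ω hbdd
    refine le_ciInf fun x => ?_
    set a : Fin (N + 1) → ℝ := fun k => f x (ξ (ω k)) with ha
    have hterm : ∀ j : Fin (N + 1),
        F (drop j ω) ≤ (1 / (N : ℝ)) * ∑ i : Fin N, a (j.succAbove i) :=
      fun j => ciInf_le (hbdd j) x
    have hsum : ∑ j : Fin (N + 1), (1 / (N : ℝ)) * ∑ i : Fin N, a (j.succAbove i)
        = ∑ k : Fin (N + 1), a k := by
      have h1 : ∀ j : Fin (N + 1),
          ∑ i : Fin N, a (j.succAbove i) = (∑ k : Fin (N + 1), a k) - a j := by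
        intro j
        have := Fin.sum_univ_succAbove a j
        linarith
      rw [← Finset.mul_sum]
      simp_rw [h1]
      rw [Finset.sum_sub_distrib, Finset.sum_const, Finset.card_univ, Fintype.card_fin]
      field_simp
      push_cast
      ring
    have : ∑ j : Fin (N + 1), F (drop j ω) ≤ ∑ k : Fin (N + 1), a k := by
      rw [← hsum]
      exact Finset.sum_le_sum fun j _ => hterm j
    have hpos : (0 : ℝ) < 1 / ((N : ℝ) + 1) := by positivity
    calc g ω ≤ (1 / ((N : ℝ) + 1)) * ∑ k : Fin (N + 1), a k := by
              exact mul_le_mul_of_nonneg_left this hpos.le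
      _ = (1 / ((N : ℝ) + 1)) * ∑ i : Fin (N + 1), f x (ξ (ω i)) := rfl
  -- ∫ g = ∫ F
  have hcomp_int : ∀ j : Fin (N + 1),
      ∫ ω, F (drop j ω) ∂P1 = ∫ ω, F ω ∂μN := by
    intro j
    rw [← (hmp j).map_eq]
    exact (integral_map (hmp j).measurable.aemeasurable
      ((hmp j).map_eq.symm ▸ hinfN.aestronglyMeasurable)).symm
  have hgeq : ∫ ω, g ω ∂P1 = ∫ ω, F ω ∂μN := by
    rw [hg]
    simp only
    rw [integral_const_mul, integral_finset_sum _ fun j _ => hint_comp j]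
    simp_rw [hcomp_int]
    rw [Finset.sum_const]
    simp
    field_simp
  calc ∫ ω, (⨅ x : X, (1 / ((N : ℝ) + 1)) * ∑ i : Fin (N + 1), f x (ξ (ω i))) ∂P1
      ≥ ∫ ω, g ω ∂P1 := integral_mono_ae hgint hinfN1 hae
    _ = ∫ ω, F ω ∂μN := hgeq
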